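/- Let ρ : Hom(ℂ³, ℂ²) → 𝔰𝔭(1) ≅ 𝔰𝔩₂ be the map ρ(i) = i∘i*, where ℂ³ carries the standard orthogonal form, ℂ² the standard symplectic form, and i* is the right adjoint of i. Then the ring of Sp(1)-invariant functions on the scheme-theoretic fiber ρ^{-1}(0) (cut out by the 3 entries of i∘i* as polynomials on Hom(ℂ³,ℂ²) ≅ ℂ⁶) is isomorphic, as a graded ring, to ℂ[x,y,z]/(x,y,z)², i.e. it is 4-dimensional, spanned by 1 and three elements of degree 2. In particular ρ^{-1}(0)//Sp(1) is a non-reduced scheme whose reduction is a point. -/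

import Mathlib

set_option synthInstance.maxHeartbeats 1000000
set_option maxHeartbeats 1000000
open MvPolynomial

/-- the coordinate ring of `Hom(ℂ³,ℂ²) ≅ ℂ⁶`, with variables `X (r,c)` = the `(r,c)` matrix
entry of `i`. -/
noncomputable abbrev PolyHom := MvPolynomial (Fin 2 × Fin 3) ℂ

/-- the generic matrix of coordinate functions. -/
noncomputable def iGen : Matrix (Fin 2) (Fin 3) PolyHom := fun r c => X (r, c)

/-- the standard symplectic matrix `J` on `ℂ²` (entries viewed as constants). -/
noncomputable def Jmat : Matrix (Fin 2) (Fin 2) PolyHom :=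
  (Matrix.of ![![0, 1], ![-1, 0]]).map (C : ℂ →+* PolyHom)

/-- the entries of `ρ(i) = i∘i* = i·iᵀ·J` as polynomials on `Hom(ℂ³,ℂ²)`. -/
noncomputable def rhoMat : Matrix (Fin 2) (Fin 2) PolyHom := iGen * iGen.transpose * Jmat

/-- the defining ideal of the scheme-theoretic fiber `ρ⁻¹(0)`. -/
noncomputable def rhoIdeal : Ideal PolyHom :=
  Ideal.span (Set.range fun p : Fin 2 × Fin 2 => rhoMat p.1 p.2)

/-- the action of `g ∈ Sp(1) = SL(2,ℂ)` on polynomial functions on `Hom(ℂ³,ℂ²)` (by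
postcomposition on maps: `(g•f)(i) = f(g⁻¹·i)`). -/
noncomputable def spAct (g : Matrix.SpecialLinearGroup (Fin 2) ℂ) : PolyHom →ₐ[ℂ] PolyHom :=
  aeval fun p : Fin 2 × Fin 3 =>
    ∑ s : Fin 2, C ((g⁻¹ : Matrix.SpecialLinearGroup (Fin 2) ℂ) p.1 s) * X (s, p.2)

/-- the subalgebra of `Sp(1)`-invariant polynomials on `Hom(ℂ³,ℂ²)`. -/
noncomputable def spInv : Subalgebra ℂ PolyHom where
  carrier := {f | ∀ g, spAct g f = f}
  add_mem' := by intro a b ha hb g; simp [map_add, ha g, hb g]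
  mul_mem' := by intro a b ha hb g; simp [map_mul, ha g, hb g]
  algebraMap_mem' := by intro r g; simp [spAct]

/-- the ideal of relations among invariants coming from `ρ⁻¹(0)`. -/
noncomputable def spInvIdeal : Ideal spInv := Ideal.comap (Subalgebra.val spInv) rhoIdeal

/-! ### Auxiliary definitions -/

abbrev S3 := MvPolynomial (Fin 3) ℂ
abbrev Tz := TrivSqZeroExt ℂ (Fin 3 → ℂ)

noncomputable def xv (c : Fin 3) : PolyHom := X (0, c)
noncomputable def yv (c : Fin 3) : PolyHom := X (1, c)
noncomputable def Q00 : PolyHom := xv 0 ^ 2 + xv 1 ^ 2 + xv 2 ^ 2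
noncomputable def Q01 : PolyHom := xv 0 * yv 0 + xv 1 * yv 1 + xv 2 * yv 2
noncomputable def Q11 : PolyHom := yv 0 ^ 2 + yv 1 ^ 2 + yv 2 ^ 2

lemma rhoMat00 : rhoMat 0 0 = -Q01 := by
  simp [rhoMat, Matrix.mul_apply, Fin.sum_univ_succ, iGen, Jmat, Q01, xv, yv]; ring
lemma rhoMat01 : rhoMat 0 1 = Q00 := by
  simp [rhoMat, Matrix.mul_apply, Fin.sum_univ_succ, iGen, Jmat, Q00, xv, yv]; ring
lemma rhoMat10 : rhoMat 1 0 = -Q11 := by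
  simp [rhoMat, Matrix.mul_apply, Fin.sum_univ_succ, iGen, Jmat, Q11, xv, yv]; ring
lemma rhoMat11 : rhoMat 1 1 = Q01 := by
  simp [rhoMat, Matrix.mul_apply, Fin.sum_univ_succ, iGen, Jmat, Q01, xv, yv]; ring

lemma Q00_mem : Q00 ∈ rhoIdeal := by
  rw [← rhoMat01]; exact Ideal.subset_span ⟨(0,1), rfl⟩
lemma Q01_mem : Q01 ∈ rhoIdeal := by
  rw [← rhoMat11]; exact Ideal.subset_span ⟨(1,1), rfl⟩
lemma Q11_mem : Q11 ∈ rhoIdeal := by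
  have h : rhoMat 1 0 ∈ rhoIdeal := Ideal.subset_span ⟨(1,0), rfl⟩
  rw [rhoMat10] at h
  simpa using rhoIdeal.neg_mem h

/-- the three fundamental invariants (2×2 minors). -/
noncomputable def dd : Fin 3 → PolyHom :=
  ![xv 0 * yv 1 - xv 1 * yv 0, xv 0 * yv 2 - xv 2 * yv 0, xv 1 * yv 2 - xv 2 * yv 1]

/-- product of any two minors lies in the ideal. -/
lemma dd_mul_dd_mem (a b : Fin 3) : dd a * dd b ∈ rhoIdeal := by
  have key : ∀ r : PolyHom, (∃ A B CC : PolyHom, r = A * Q00 + B * Q01 + CC * Q11) →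
      r ∈ rhoIdeal := by
    rintro r ⟨A, B, CC, rfl⟩
    exact Ideal.add_mem _ (Ideal.add_mem _ (Ideal.mul_mem_left _ _ Q00_mem)
      (Ideal.mul_mem_left _ _ Q01_mem)) (Ideal.mul_mem_left _ _ Q11_mem)
  apply key
  fin_cases a <;> fin_cases b
  · exact ⟨-(yv 2 * yv 2) + Q11, xv 2 * yv 2 + yv 2 * xv 2 - Q01, -(xv 2 * xv 2),
      by simp only [dd]; simp [Q00, Q01, Q11, xv, yv]; ring⟩
  · exact ⟨-(-(yv 2 * yv 1)), -(xv 2 * yv 1 + yv 2 * xv 1), -(-(xv 2 * xv 1)),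
      by simp only [dd]; simp [Q00, Q01, Q11, xv, yv]; ring⟩
  · exact ⟨-(yv 2 * yv 0), xv 2 * yv 0 + yv 2 * xv 0, -(xv 2 * xv 0),
      by simp only [dd]; simp [Q00, Q01, Q11, xv, yv]; ring⟩
  · exact ⟨-(-(yv 1 * yv 2)), -(xv 1 * yv 2 + yv 1 * xv 2), -(-(xv 1 * xv 2)),
      by simp only [dd]; simp [Q00, Q01, Q11, xv, yv]; ring⟩
  · exact ⟨-(yv 1 * yv 1) + Q11, xv 1 * yv 1 + yv 1 * xv 1 - Q01, -(xv 1 * xv 1),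
      by simp only [dd]; simp [Q00, Q01, Q11, xv, yv]; ring⟩
  · exact ⟨-(-(yv 1 * yv 0)), -(xv 1 * yv 0 + yv 1 * xv 0), -(-(xv 1 * xv 0)),
      by simp only [dd]; simp [Q00, Q01, Q11, xv, yv]; ring⟩
  · exact ⟨-(yv 0 * yv 2), xv 0 * yv 2 + yv 0 * xv 2, -(xv 0 * xv 2),
      by simp only [dd]; simp [Q00, Q01, Q11, xv, yv]; ring⟩
  · exact ⟨-(-(yv 0 * yv 1)), -(xv 0 * yv 1 + yv 0 * xv 1), -(-(xv 0 * xv 1)),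
      by simp only [dd]; simp [Q00, Q01, Q11, xv, yv]; ring⟩
  · exact ⟨-(yv 0 * yv 0) + Q11, xv 0 * yv 0 + yv 0 * xv 0 - Q01, -(xv 0 * xv 0),
      by simp only [dd]; simp [Q00, Q01, Q11, xv, yv]; ring⟩

/-! ### invariance of the minors -/

lemma det_coe (h : Matrix.SpecialLinearGroup (Fin 2) ℂ) :
    (h : Matrix (Fin 2) (Fin 2) ℂ) 0 0 * (h : Matrix (Fin 2) (Fin 2) ℂ) 1 1
      - (h : Matrix (Fin 2) (Fin 2) ℂ) 0 1 * (h : Matrix (Fin 2) (Fin 2) ℂ) 1 0 = 1 := by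
  have hd := h.2
  rwa [Matrix.det_fin_two] at hd

lemma spAct_dd (g : Matrix.SpecialLinearGroup (Fin 2) ℂ) (k : Fin 3) :
    spAct g (dd k) = dd k := by
  have hdet := det_coe g⁻¹
  set a := ((g⁻¹ : Matrix.SpecialLinearGroup (Fin 2) ℂ) : Matrix (Fin 2) (Fin 2) ℂ) with ha
  have hdet' : (C (a 0 0) * C (a 1 1) - C (a 0 1) * C (a 1 0) : PolyHom) = 1 := by
    rw [← map_mul, ← map_mul, ← map_sub, hdet, map_one]
  have key : ∀ c c' : Fin 3, spAct g (xv c * yv c' - xv c' * yv c)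
      = xv c * yv c' - xv c' * yv c := by
    intro c c'
    simp only [spAct, map_sub, map_mul, aeval_X, xv, yv, Fin.sum_univ_two]
    rw [← ha]
    linear_combination (X ((0:Fin 2), c) * X ((1:Fin 2), c') - X (0, c') * X (1, c)) * hdet'
  fin_cases k <;> exact key _ _

/-! ### evaluation lemmas -/

lemma eval_fun_congr {V : Type*} (f : MvPolynomial V ℂ) {m m' : V → ℂ} (h : m = m') :
    eval m f = eval m' f := by rw [h]

lemma eval_aeval'' {V W : Type*} (m : W → ℂ) (σ : V → MvPolynomial W ℂ)
    (f : MvPolynomial V ℂ) : eval m (aeval σ f) = eval (fun v => eval m (σ v)) f := by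
  induction f using MvPolynomial.induction_on with
  | C a => simp
  | add p q hp hq => simp only [map_add, hp, hq]
  | mul_X p i hp => simp only [map_mul, aeval_X, eval_X, hp]

lemma polyEval_aeval {V : Type*} (t : ℂ) (σ : V → Polynomial ℂ)
    (f : MvPolynomial V ℂ) : (aeval σ f).eval t = eval (fun v => (σ v).eval t) f := by
  induction f using MvPolynomial.induction_on with
  | C a => simp
  | add p q hp hq => simp only [map_add, Polynomial.eval_add, hp, hq]
  | mul_X p i hp => simp only [map_mul, aeval_X, eval_X, Polynomial.eval_mul, hp]

noncomputable def Dv (k : Fin 3) (m : Fin 2 × Fin 3 → ℂ) : ℂ := eval m (dd k)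

lemma Dv0_eq (m : Fin 2 × Fin 3 → ℂ) : Dv 0 m = m (0,0) * m (1,1) - m (0,1) * m (1,0) := by
  simp [Dv, dd, xv, yv]
lemma Dv1_eq (m : Fin 2 × Fin 3 → ℂ) : Dv 1 m = m (0,0) * m (1,2) - m (0,2) * m (1,0) := by
  simp [Dv, dd, xv, yv]
lemma Dv2_eq (m : Fin 2 × Fin 3 → ℂ) : Dv 2 m = m (0,1) * m (1,2) - m (0,2) * m (1,1) := by
  simp [Dv, dd, xv, yv]

noncomputable def gcan (m : Fin 2 × Fin 3 → ℂ) (hu : Dv 0 m ≠ 0) :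
    Matrix.SpecialLinearGroup (Fin 2) ℂ :=
  ⟨!![m (1,1) / Dv 0 m, -(m (0,1)) / Dv 0 m; -(m (1,0)), m (0,0)], by
    rw [Matrix.det_fin_two_of]
    field_simp
    simp only [Dv0_eq, show (1 : Fin 2 × Fin 3) = ((1:Fin 2),(1:Fin 3)) from rfl,
      show (0 : Fin 2 × Fin 3) = ((0:Fin 2),(0:Fin 3)) from rfl]
    ring⟩

lemma eval_spAct (g : Matrix.SpecialLinearGroup (Fin 2) ℂ) (m : Fin 2 × Fin 3 → ℂ)
    (f : PolyHom) : eval m (spAct g f) =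
      eval (fun p : Fin 2 × Fin 3 =>
        ∑ s : Fin 2, (g⁻¹ : Matrix.SpecialLinearGroup (Fin 2) ℂ) p.1 s * m (s, p.2)) f := by
  rw [spAct, eval_aeval'']
  have hfun : (fun v : Fin 2 × Fin 3 => eval m
      (∑ s : Fin 2, C ((g⁻¹ : Matrix.SpecialLinearGroup (Fin 2) ℂ) v.1 s) * X (s, v.2)))
      = fun p : Fin 2 × Fin 3 =>
        ∑ s : Fin 2, (g⁻¹ : Matrix.SpecialLinearGroup (Fin 2) ℂ) p.1 s * m (s, p.2) := by
    funext p
    simp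
  rw [hfun]

noncomputable def canonF (m : Fin 2 × Fin 3 → ℂ) : Fin 2 × Fin 3 → ℂ := fun p =>
  ![![1, 0, -(Dv 2 m)/(Dv 0 m)], ![0, Dv 0 m, Dv 1 m]] p.1 p.2

lemma eval_canon {f : PolyHom} (hf : ∀ g, spAct g f = f) (m : Fin 2 × Fin 3 → ℂ)
    (hu : Dv 0 m ≠ 0) : eval m f = eval (canonF m) f := by
  conv_lhs => rw [← hf (gcan m hu)⁻¹]
  rw [eval_spAct]
  have hfun : (fun p : Fin 2 × Fin 3 =>
      ∑ s : Fin 2, (((gcan m hu)⁻¹)⁻¹ : Matrix.SpecialLinearGroup (Fin 2) ℂ) p.1 s * m (s, p.2))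
      = canonF m := by
    funext p
    rw [inv_inv]
    obtain ⟨r, c⟩ := p
    fin_cases r <;> fin_cases c <;>
    · simp only [gcan, canonF, Fin.sum_univ_two, Matrix.SpecialLinearGroup.coe_mk,
        Matrix.cons_val', Matrix.cons_val_zero, Matrix.empty_val', Matrix.cons_val_fin_one,
        Matrix.cons_val_one, Matrix.head_cons, Matrix.head_fin_const, Matrix.cons_val_two,
        Matrix.tail_cons, Matrix.of_apply, Matrix.cons_val, Fin.zero_eta, Fin.mk_one, Fin.reduceFinMk]
      field_simp
      simp -failIfUnchanged only [Fin.reduceFinMk, Dv0_eq, Dv1_eq, Dv2_eq,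
        show (1 : Fin 2 × Fin 3) = ((1:Fin 2),(1:Fin 3)) from rfl,
        show (0 : Fin 2 × Fin 3) = ((0:Fin 2),(0:Fin 3)) from rfl]
      try ring
  rw [hfun]

/-! ### clearing denominators -/

lemma suppBound {N : ℕ} {p : S3} (hd : degreeOf 2 p ≤ N) : ∀ m ∈ p.support, m 2 ≤ N := by
  intro m hm
  calc m 2 ≤ p.support.sup fun m => m 2 := Finset.le_sup (f := fun m : Fin 3 →₀ ℕ => m 2) hm
  _ = degreeOf 2 p := (degreeOf_eq_sup _ _).symm
  _ ≤ N := hd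

lemma eval_indep (p : S3) (hp : ∀ m ∈ p.support, m 2 = 0) (w w' : Fin 3 → ℂ)
    (e0 : w 0 = w' 0) (e1 : w 1 = w' 1) : eval w p = eval w' p := by
  rw [eval_eq', eval_eq']
  apply Finset.sum_congr rfl
  intro m hm
  rw [Fin.prod_univ_three, Fin.prod_univ_three, hp m hm, e0, e1]
  simp

lemma eval_indep0 (p : S3) (hp : ∀ m ∈ p.support, m 0 = 0) (w w' : Fin 3 → ℂ)
    (e1 : w 1 = w' 1) (e2 : w 2 = w' 2) : eval w p = eval w' p := by
  rw [eval_eq', eval_eq']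
  apply Finset.sum_congr rfl
  intro m hm
  rw [Fin.prod_univ_three, Fin.prod_univ_three, hp m hm, e1, e2]
  simp

lemma clear_denoms : ∀ N : ℕ, ∀ h : S3, degreeOf 2 h ≤ N →
    ∃ P : S3, ∀ u v w : ℂ, u ≠ 0 →
      u ^ N * eval ![u, v, -w/u] h = eval ![u, v, w] P := by
  intro N
  induction N with
  | zero =>
    intro h hd
    refine ⟨h, fun u v w hu => ?_⟩
    have hsup : ∀ m ∈ h.support, m 2 = 0 := fun m hm => Nat.le_zero.mp (suppBound hd m hm)
    rw [pow_zero, one_mul]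
    exact eval_indep h hsup _ _ (by simp) (by simp)
  | succ N ih =>
    intro h hd
    have hsplit := divMonomial_add_modMonomial_single h 2
    set s : Fin 3 →₀ ℕ := Finsupp.single 2 1 with hs
    set h1 := divMonomial h s with hh1
    set h0 := modMonomial h s with hh0
    have hd1 : degreeOf 2 h1 ≤ N := by
      rw [degreeOf_eq_sup]
      apply Finset.sup_le
      intro m hm
      rw [mem_support_iff, hh1, coeff_divMonomial] at hm
      have h2 := suppBound hd _ (mem_support_iff.mpr hm)
      have : (s + m) 2 = m 2 + 1 := by simp [hs]; omega
      omega
    have hsup0 : ∀ m ∈ h0.support, m 2 = 0 := by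
      intro m hm
      by_contra hne
      have hle : s ≤ m := by
        rw [hs, Finsupp.single_le_iff]
        omega
      rw [mem_support_iff, hh0, coeff_modMonomial_of_le _ hle] at hm
      exact hm rfl
    obtain ⟨P1, hP1⟩ := ih h1 hd1
    refine ⟨X 0 ^ (N+1) * h0 - X 2 * P1, fun u v w hu => ?_⟩
    have e0 : eval ![u, v, -w/u] h0 = eval ![u, v, w] h0 :=
      eval_indep h0 hsup0 _ _ (by simp) (by simp)
    have key := hP1 u v w hu
    rw [← hsplit]
    simp only [map_add, map_mul, eval_X, map_sub, map_pow]
    simp only [Matrix.cons_val_zero, Matrix.cons_val_one, Matrix.head_cons, Matrix.cons_val_two,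
      Matrix.tail_cons]
    rw [e0, ← key]
    field_simp
    ring

/-! ### the first fundamental theorem -/

/-- the slice substitution -/
noncomputable def sliceSub : Fin 2 × Fin 3 → S3 :=
  fun p => ![![1, 0, X 2], ![0, X 0, X 1]] p.1 p.2

lemma eval_aeval_dd (m : Fin 2 × Fin 3 → ℂ) (P : S3) :
    eval m (aeval dd P) = eval ![Dv 0 m, Dv 1 m, Dv 2 m] P := by
  rw [eval_aeval'']
  apply eval_fun_congr
  funext k
  fin_cases k <;> simp [Dv]

/-- family with `d₁₂ = 0`, `d₁₃ = a`, `d₂₃ = b`. -/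
noncomputable def pfam (a b : ℂ) : Fin 2 × Fin 3 → ℂ := fun p =>
  ![![a, b, 0], ![0, 0, 1]] p.1 p.2

lemma dd0_ne : dd 0 ≠ 0 := by
  intro h
  have := congrArg (eval (fun p => if p = ((0:Fin 2),(0:Fin 3)) ∨ p = (1,1) then 1 else 0)) h
  simp [dd, xv, yv] at this

/-- saturation: we may divide by powers of `dd 0`. -/
lemma saturate : ∀ N : ℕ, ∀ f : PolyHom, ∀ P : S3, f * dd 0 ^ N = aeval dd P →
    ∃ Q : S3, f = aeval dd Q := by
  intro N
  induction N with
  | zero => intro f P hfP; exact ⟨P, by simpa using hfP⟩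
  | succ N ih =>
    intro f P hfP
    have hsplit := divMonomial_add_modMonomial_single P 0
    set s : Fin 3 →₀ ℕ := Finsupp.single 0 1 with hs
    set P1 := divMonomial P s with hP1
    set P0 := modMonomial P s with hP0
    have hsup0 : ∀ m ∈ P0.support, m 0 = 0 := by
      intro m hm
      by_contra hne
      have hle : s ≤ m := by
        rw [hs, Finsupp.single_le_iff]
        omega
      rw [mem_support_iff, hP0, coeff_modMonomial_of_le _ hle] at hm
      exact hm rfl
    have hfam : ∀ a b : ℂ, eval ![(0:ℂ), a, b] P0 = 0 := by
      intro a b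
      have hDv0 : Dv 0 (pfam a b) = 0 := by simp [Dv, dd, pfam, xv, yv]
      have hDv1 : Dv 1 (pfam a b) = a := by simp [Dv, dd, pfam, xv, yv]
      have hDv2 : Dv 2 (pfam a b) = b := by simp [Dv, dd, pfam, xv, yv]
      have hid := congrArg (eval (pfam a b)) hfP
      rw [map_mul, map_pow, ← hsplit, map_add, map_mul, aeval_X, map_add, map_mul] at hid
      simp only [eval_aeval_dd] at hid
      rw [show eval (pfam a b) (dd 0) = Dv 0 (pfam a b) from rfl] at hid
      rw [hDv0, hDv1, hDv2] at hid
      simpa [zero_pow (Nat.succ_ne_zero N)] using hid.symm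
    have hP0z : aeval dd P0 = 0 := by
      apply MvPolynomial.funext
      intro x
      rw [map_zero, eval_aeval_dd]
      have := eval_indep0 P0 hsup0 ![Dv 0 x, Dv 1 x, Dv 2 x] ![0, Dv 1 x, Dv 2 x]
        (by simp) (by simp)
      rw [this]
      exact hfam (Dv 1 x) (Dv 2 x)
    have hz : dd 0 * (f * dd 0 ^ N - aeval dd P1) = 0 := by
      rw [← hsplit, map_add, map_mul, aeval_X, hP0z, add_zero] at hfP
      rw [mul_sub, ← hfP]
      ring
    rcases mul_eq_zero.mp hz with h' | h'
    · exact absurd h' dd0_ne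
    · exact ih f P1 (sub_eq_zero.mp h')

theorem fft {f : PolyHom} (hf : ∀ g, spAct g f = f) : ∃ Q : S3, f = aeval dd Q := by
  set h := aeval sliceSub f with hh
  obtain ⟨P, hP⟩ := clear_denoms (degreeOf 2 h) h le_rfl
  have key : ∀ m : Fin 2 × Fin 3 → ℂ, Dv 0 m ≠ 0 →
      eval m f * Dv 0 m ^ (degreeOf 2 h) = eval m (aeval dd P) := by
    intro m hu
    rw [eval_canon hf m hu, eval_aeval_dd]
    have hc : eval (canonF m) f
        = eval ![Dv 0 m, Dv 1 m, -(Dv 2 m)/(Dv 0 m)] h := by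
      rw [hh, eval_aeval'']
      apply eval_fun_congr
      funext p
      obtain ⟨r, c⟩ := p
      fin_cases r <;> fin_cases c <;> simp [sliceSub, canonF, neg_div]
    rw [hc, mul_comm]
    exact hP (Dv 0 m) (Dv 1 m) (Dv 2 m) hu
  have main : f * dd 0 ^ (degreeOf 2 h) = aeval dd P := by
    have hz : (f * dd 0 ^ (degreeOf 2 h) - aeval dd P) * dd 0 = 0 := by
      apply MvPolynomial.funext
      intro m
      rw [map_zero, map_mul, map_sub, map_mul, map_pow]
      by_cases hu : Dv 0 m ≠ 0
      · rw [show eval m (dd 0) = Dv 0 m from rfl, key m hu]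
        ring
      · push_neg at hu
        rw [show eval m (dd 0) = Dv 0 m from rfl, hu, mul_zero]
    rcases mul_eq_zero.mp hz with h' | h'
    · exact sub_eq_zero.mp h'
    · exact absurd h' dd0_ne
  exact saturate (degreeOf 2 h) f P main

/-! ### the model ring `ℂ[x,y,z]/(x,y,z)²` -/

noncomputable def J2 : Ideal S3 := (Ideal.span (Set.range (X : Fin 3 → S3))) ^ 2

noncomputable def toTz : S3 →ₐ[ℂ] Tz :=
  aeval fun i => TrivSqZeroExt.inr (Pi.single i 1)

lemma fin3_cases (i : Fin 3) : i = 0 ∨ i = 1 ∨ i = 2 := by omega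

lemma XiXj_mem_J2 (i j : Fin 3) : X i * X j ∈ J2 := by
  rw [J2, sq]
  exact Ideal.mul_mem_mul (Ideal.subset_span ⟨i, rfl⟩) (Ideal.subset_span ⟨j, rfl⟩)

lemma small_classify (m : Fin 3 →₀ ℕ) (h : m 0 + m 1 + m 2 ≤ 1) :
    m = 0 ∨ m = Finsupp.single 0 1 ∨ m = Finsupp.single 1 1 ∨ m = Finsupp.single 2 1 := by
  have hc : (m 0 = 0 ∧ m 1 = 0 ∧ m 2 = 0) ∨ (m 0 = 1 ∧ m 1 = 0 ∧ m 2 = 0) ∨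
      (m 0 = 0 ∧ m 1 = 1 ∧ m 2 = 0) ∨ (m 0 = 0 ∧ m 1 = 0 ∧ m 2 = 1) := by omega
  rcases hc with ⟨h0, h1, h2⟩ | ⟨h0, h1, h2⟩ | ⟨h0, h1, h2⟩ | ⟨h0, h1, h2⟩
  · left; ext i; rcases fin3_cases i with rfl | rfl | rfl <;> simp [h0, h1, h2]
  · right; left; ext i
    rcases fin3_cases i with rfl | rfl | rfl <;> simp [Finsupp.single_apply, h0, h1, h2]
  · right; right; left; ext i
    rcases fin3_cases i with rfl | rfl | rfl <;> simp [Finsupp.single_apply, h0, h1, h2]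
  · right; right; right; ext i
    rcases fin3_cases i with rfl | rfl | rfl <;> simp [Finsupp.single_apply, h0, h1, h2]

lemma mon_mem_J2 (s : Fin 3 →₀ ℕ) (hs : 2 ≤ s 0 + s 1 + s 2) (c : ℂ) :
    monomial s c ∈ J2 := by
  obtain ⟨i, j, hle⟩ : ∃ i j : Fin 3, Finsupp.single i 1 + Finsupp.single j 1 ≤ s := by
    have hc : (2 ≤ s 0) ∨ (2 ≤ s 1) ∨ (2 ≤ s 2) ∨ (1 ≤ s 0 ∧ 1 ≤ s 1) ∨
        (1 ≤ s 0 ∧ 1 ≤ s 2) ∨ (1 ≤ s 1 ∧ 1 ≤ s 2) := by omega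
    have key : ∀ i j : Fin 3, 1 ≤ s i → 1 ≤ s j → i ≠ j →
        Finsupp.single i 1 + Finsupp.single j 1 ≤ s := by
      intro i j hi hj hij
      rw [Finsupp.le_def]
      intro a
      rcases fin3_cases a with rfl | rfl | rfl <;>
        rcases fin3_cases i with rfl | rfl | rfl <;>
        rcases fin3_cases j with rfl | rfl | rfl <;>
        simp_all [Finsupp.single_apply]
    have key2 : ∀ i : Fin 3, 2 ≤ s i → Finsupp.single i 1 + Finsupp.single i 1 ≤ s := by
      intro i hi
      rw [Finsupp.le_def]
      intro a
      rcases fin3_cases a with rfl | rfl | rfl <;>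
        rcases fin3_cases i with rfl | rfl | rfl <;>
        simp_all [Finsupp.single_apply]
    rcases hc with h | h | h | ⟨h, h'⟩ | ⟨h, h'⟩ | ⟨h, h'⟩
    · exact ⟨0, 0, key2 0 h⟩
    · exact ⟨1, 1, key2 1 h⟩
    · exact ⟨2, 2, key2 2 h⟩
    · exact ⟨0, 1, key 0 1 h h' (by decide)⟩
    · exact ⟨0, 2, key 0 2 h h' (by decide)⟩
    · exact ⟨1, 2, key 1 2 h h' (by decide)⟩
  have heq : monomial s c
      = (X i * X j) * monomial (s - (Finsupp.single i 1 + Finsupp.single j 1)) c := by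
    rw [X, X, monomial_mul, monomial_mul, one_mul, one_mul, add_tsub_cancel_of_le hle]
  rw [heq]
  exact Ideal.mul_mem_right _ _ (XiXj_mem_J2 i j)

lemma decomp (P : S3) : P - C (constantCoeff P)
    - ∑ i : Fin 3, C (coeff (Finsupp.single i 1) P) * X i ∈ J2 := by
  set E := P - C (constantCoeff P) - ∑ i : Fin 3, C (coeff (Finsupp.single i 1) P) * X i with hE
  have hcoeff : ∀ m : Fin 3 →₀ ℕ, m 0 + m 1 + m 2 ≤ 1 → coeff m E = 0 := by
    intro m hm
    rcases small_classify m hm with rfl | rfl | rfl | rfl <;>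
      simp [hE, coeff_sub, Fin.sum_univ_three, coeff_C_mul, coeff_X', coeff_C,
        Finsupp.single_eq_single_iff, constantCoeff_eq, Finsupp.single_eq_zero,
        (by decide : (0 : Fin 3) ≠ 1), (by decide : (0 : Fin 3) ≠ 2),
        (by decide : (1 : Fin 3) ≠ 2)] <;>
      (try (intro h; rw [eq_comm, Finsupp.single_eq_zero] at h; exact absurd h one_ne_zero))
  rw [as_sum E]
  apply Ideal.sum_mem
  intro m hm
  apply mon_mem_J2
  by_contra hlt
  exact (mem_support_iff.mp hm) (hcoeff m (by omega))

lemma fst_span_zero : ∀ r ∈ Ideal.span (Set.range (X : Fin 3 → S3)),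
    (toTz r).fst = 0 := by
  intro r hr
  induction hr using Submodule.span_induction with
  | mem x hx =>
    obtain ⟨i, rfl⟩ := hx
    simp [toTz]
  | zero => simp
  | add x y _ _ hx hy => simp [hx, hy]
  | smul c x _ hx => simp [smul_eq_mul, TrivSqZeroExt.fst_mul, hx]

lemma J2_le_ker : J2 ≤ RingHom.ker (toTz : S3 →ₐ[ℂ] Tz).toRingHom := by
  rw [J2, sq]
  refine Ideal.mul_le.mpr ?_
  intro r hr s hs
  have h1 := fst_span_zero r hr
  have h2 := fst_span_zero s hs
  rw [RingHom.mem_ker]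
  show toTz (r * s) = 0
  rw [map_mul]
  ext
  · rw [TrivSqZeroExt.fst_mul, h1, zero_mul, TrivSqZeroExt.fst_zero]
  · rw [TrivSqZeroExt.snd_mul, h1, h2, TrivSqZeroExt.snd_zero]
    simp

lemma toTz_surj : Function.Surjective toTz := by
  intro x
  refine ⟨C x.fst + ∑ i : Fin 3, C (x.snd i) * X i, ?_⟩
  rw [map_add, map_sum]
  simp only [toTz, map_mul, aeval_X, aeval_C]
  ext : 1
  · simp [TrivSqZeroExt.fst_sum, TrivSqZeroExt.algebraMap_eq_inl]
  · simp only [TrivSqZeroExt.snd_sum, TrivSqZeroExt.snd_add,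
      TrivSqZeroExt.algebraMap_eq_inl, TrivSqZeroExt.snd_inl,
      TrivSqZeroExt.snd_smul, TrivSqZeroExt.snd_inr, zero_add,
      Algebra.algebraMap_self, map_id, TrivSqZeroExt.inr_smul]
    funext j
    simp [TrivSqZeroExt.snd_smul, Finset.sum_apply, Pi.single_apply]

lemma ker_toTz : RingHom.ker (toTz : S3 →ₐ[ℂ] Tz).toRingHom = J2 := by
  apply le_antisymm _ J2_le_ker
  intro P hP
  have hdec := decomp P
  set a := constantCoeff P with ha
  set b := fun i => coeff (Finsupp.single i 1) P with hb
  have hlin : C a + ∑ i : Fin 3, C (b i) * X i ∈ RingHom.ker (toTz : S3 →ₐ[ℂ] Tz).toRingHom := by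
    have hE := J2_le_ker hdec
    have heq : C a + ∑ i : Fin 3, C (b i) * X i
        = P - (P - C a - ∑ i : Fin 3, C (b i) * X i) := by ring
    rw [heq]
    exact Ideal.sub_mem _ hP hE
  have himg : toTz (C a + ∑ i : Fin 3, C (b i) * X i) = 0 := hlin
  rw [map_add, map_sum] at himg
  simp only [toTz, map_mul, aeval_X, aeval_C] at himg
  have hfst := congrArg TrivSqZeroExt.fst himg
  have hsnd := congrArg TrivSqZeroExt.snd himg
  simp only [TrivSqZeroExt.fst_add, TrivSqZeroExt.fst_sum, TrivSqZeroExt.snd_add,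
    TrivSqZeroExt.snd_sum, TrivSqZeroExt.algebraMap_eq_inl, TrivSqZeroExt.fst_inl,
    TrivSqZeroExt.snd_inl, TrivSqZeroExt.fst_mul, TrivSqZeroExt.snd_mul,
    TrivSqZeroExt.fst_inr, TrivSqZeroExt.snd_inr, TrivSqZeroExt.fst_zero,
    TrivSqZeroExt.snd_zero, mul_zero, Finset.sum_const_zero, add_zero, zero_add] at hfst hsnd
  have hbz : ∀ j : Fin 3, b j = 0 := by
    intro j
    have := congrFun hsnd j
    simpa [Finset.sum_apply, Pi.single_apply] using this
  have h2 : (∑ i : Fin 3, C (b i) * X i) = 0 := by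
    apply Finset.sum_eq_zero
    intro i _
    rw [hbz i, map_zero, zero_mul]
  rw [hfst, h2] at hdec
  simpa using hdec

lemma X0_not_mem_J2 : (X 0 : S3) ∉ J2 := by
  intro h
  have := J2_le_ker h
  rw [RingHom.mem_ker] at this
  have h2 : toTz (X 0) = 0 := this
  rw [toTz, aeval_X] at h2
  have := congrArg TrivSqZeroExt.snd h2
  rw [TrivSqZeroExt.snd_inr, TrivSqZeroExt.snd_zero] at this
  have := congrFun this 0
  simp at this

/-! ### linear independence of the minors modulo the ideal -/

lemma gen_scale (i : Fin 2 × Fin 2) (t : ℂ) (m : Fin 2 × Fin 3 → ℂ) :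
    eval (t • m) (rhoMat i.1 i.2) = t^2 * eval m (rhoMat i.1 i.2) := by
  fin_cases i <;>
    simp only [Fin.mk_zero, Fin.mk_one, rhoMat00, rhoMat01, rhoMat10, rhoMat11] <;>
    simp [Q00, Q01, Q11, xv, yv, smul_eq_mul] <;> ring

lemma gen_zero (i : Fin 2 × Fin 2) : eval (0 : Fin 2 × Fin 3 → ℂ) (rhoMat i.1 i.2) = 0 := by
  fin_cases i <;>
    simp only [Fin.mk_zero, Fin.mk_one, rhoMat00, rhoMat01, rhoMat10, rhoMat11] <;>
    simp [Q00, Q01, Q11, xv, yv]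

lemma lin_coeffs_zero (α β γ δ : ℂ)
    (h : C α + C β * dd 0 + C γ * dd 1 + C δ * dd 2 ∈ rhoIdeal) :
    α = 0 ∧ β = 0 ∧ γ = 0 ∧ δ = 0 := by
  rw [rhoIdeal] at h
  obtain ⟨c, hc⟩ := (Submodule.mem_span_range_iff_exists_fun PolyHom).mp h
  -- first: α = 0
  have hα : α = 0 := by
    have h0 := congrArg (eval (0 : Fin 2 × Fin 3 → ℂ)) hc
    simp only [map_sum, smul_eq_mul, map_mul, map_add, eval_C] at h0
    have : ∀ i ∈ Finset.univ, eval (0 : Fin 2 × Fin 3 → ℂ) (c i)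
        * eval (0 : Fin 2 × Fin 3 → ℂ) ((fun p : Fin 2 × Fin 2 => rhoMat p.1 p.2) i) = 0 := by
      intro i _
      rw [gen_zero i, mul_zero]
    rw [Finset.sum_eq_zero this] at h0
    have hdz : ∀ k : Fin 3, eval (0 : Fin 2 × Fin 3 → ℂ) (dd k) = 0 := by
      intro k
      fin_cases k <;> simp [dd, xv, yv]
    rw [hdz 0, hdz 1, hdz 2] at h0
    simpa using h0.symm
  subst hα
  -- pure quadratic invariant part
  set e' : PolyHom := C β * dd 0 + C γ * dd 1 + C δ * dd 2 with he'
  have hce : ∑ i : Fin 2 × Fin 2, c i • (fun p : Fin 2 × Fin 2 => rhoMat p.1 p.2) i = e' := by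
    rw [hc, he', map_zero, zero_add]
  have ddscale : ∀ (k : Fin 3) (t : ℂ) (m : Fin 2 × Fin 3 → ℂ),
      eval (t • m) (dd k) = t^2 * eval m (dd k) := by
    intro k t m
    fin_cases k <;> simp [dd, xv, yv, smul_eq_mul] <;> ring
  have hescale : ∀ (t : ℂ) (m : Fin 2 × Fin 3 → ℂ), eval (t • m) e' = t^2 * eval m e' := by
    intro t m
    rw [he', map_add, map_add, map_mul, map_mul, map_mul, eval_C, eval_C, eval_C,
      ddscale 0 t m, ddscale 1 t m, ddscale 2 t m]
    simp only [map_add, map_mul, eval_C]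
    ring
  have hkey : ∃ γv : Fin 2 × Fin 2 → ℂ, ∀ m : Fin 2 × Fin 3 → ℂ,
      eval m e' = ∑ i : Fin 2 × Fin 2, γv i * eval m (rhoMat i.1 i.2) := by
    refine ⟨fun i => eval 0 (c i), fun m => ?_⟩
    set κ : PolyHom →ₐ[ℂ] Polynomial ℂ :=
      aeval (fun p : Fin 2 × Fin 3 => Polynomial.C (m p) * Polynomial.X) with hκdef
    have hκ : ∀ (q : PolyHom) (t : ℂ), (κ q).eval t = eval (t • m) q := by
      intro q t
      rw [hκdef, polyEval_aeval]
      apply eval_fun_congr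
      funext v
      simp only [Polynomial.eval_mul, Polynomial.eval_C, Polynomial.eval_X, Pi.smul_apply,
        smul_eq_mul]
      ring
    set ψ : Polynomial ℂ := ∑ i : Fin 2 × Fin 2, (κ (c i)) * Polynomial.C (eval m (rhoMat i.1 i.2)) with hψdef
    have hψ : Polynomial.X^2 * ψ = Polynomial.X^2 * Polynomial.C (eval m e') := by
      apply Polynomial.funext
      intro t
      simp only [Polynomial.eval_mul, Polynomial.eval_pow, Polynomial.eval_X, hψdef,
        Polynomial.eval_finset_sum, Polynomial.eval_C]
      have h1 := congrArg (eval (t • m)) hce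
      simp only [map_sum, smul_eq_mul, map_mul] at h1
      calc t^2 * ∑ i : Fin 2 × Fin 2, ((κ (c i)).eval t * eval m (rhoMat i.1 i.2))
          = ∑ i : Fin 2 × Fin 2, eval (t • m) (c i) * (t^2 * eval m (rhoMat i.1 i.2)) := by
            rw [Finset.mul_sum]
            apply Finset.sum_congr rfl
            intro i _
            rw [hκ]
            ring
        _ = ∑ i : Fin 2 × Fin 2, eval (t • m) (c i) * eval (t • m) (rhoMat i.1 i.2) := by
            apply Finset.sum_congr rfl
            intro i _
            rw [gen_scale i t m]
        _ = eval (t • m) e' := h1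
        _ = t^2 * eval m e' := hescale t m
    have hcancel : ψ = Polynomial.C (eval m e') :=
      mul_left_cancel₀ (pow_ne_zero 2 Polynomial.X_ne_zero) hψ
    have h0 := congrArg (Polynomial.eval 0) hcancel
    simp only [hψdef, Polynomial.eval_finset_sum, Polynomial.eval_mul, Polynomial.eval_C] at h0
    rw [← h0]
    apply Finset.sum_congr rfl
    intro i _
    rw [hκ (c i) 0, zero_smul]
  obtain ⟨γv, hγ⟩ := hkey
  -- pair evaluations
  have pair : ∀ m m' : Fin 2 × Fin 3 → ℂ,
      (∀ i : Fin 2 × Fin 2, eval m (rhoMat i.1 i.2) = eval m' (rhoMat i.1 i.2)) →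
      eval m e' = eval m' e' := by
    intro m m' hg
    rw [hγ m, hγ m']
    apply Finset.sum_congr rfl
    intro i _
    rw [hg i]
  have geq : ∀ (x0 x1 x2 y0 y1 y2 : ℂ), x0*y0 + x1*y1 + x2*y2 = 0 → ∀ i : Fin 2 × Fin 2,
      eval (fun p => ![![x0, x1, x2], ![y0, y1, y2]] p.1 p.2) (rhoMat i.1 i.2)
      = eval (fun p => ![![x0, x1, x2], ![-y0, -y1, -y2]] p.1 p.2) (rhoMat i.1 i.2) := by
    intro x0 x1 x2 y0 y1 y2 hortho i
    fin_cases i <;>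
      simp only [Fin.mk_zero, Fin.mk_one, rhoMat00, rhoMat01, rhoMat10, rhoMat11] <;>
      simp [Q00, Q01, Q11, xv, yv] <;>
      first
        | linear_combination hortho
        | linear_combination (-(1:ℂ)) * hortho
        | linear_combination (3:ℂ) * hortho
        | linear_combination (-(3:ℂ)) * hortho
        | linear_combination (2:ℂ) * hortho
        | linear_combination (-(2:ℂ)) * hortho
  have coefeq : ∀ z : ℂ, z = -z → z = 0 := fun z hz => by linear_combination hz / 2
  refine ⟨rfl, ?_, ?_, ?_⟩
  · apply coefeq
    have h1 := pair (fun p => ![![1,0,0],![0,1,0]] p.1 p.2)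
      (fun p => ![![1,0,0],![-0,-1,-0]] p.1 p.2) (geq 1 0 0 0 1 0 (by ring))
    rw [he'] at h1
    simpa [dd, xv, yv] using h1
  · apply coefeq
    have h1 := pair (fun p => ![![1,0,0],![0,0,1]] p.1 p.2)
      (fun p => ![![1,0,0],![-0,-0,-1]] p.1 p.2) (geq 1 0 0 0 0 1 (by ring))
    rw [he'] at h1
    simpa [dd, xv, yv] using h1
  · apply coefeq
    have h1 := pair (fun p => ![![0,1,0],![0,0,1]] p.1 p.2)
      (fun p => ![![0,1,0],![-0,-0,-1]] p.1 p.2) (geq 0 1 0 0 0 1 (by ring))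
    rw [he'] at h1
    simpa [dd, xv, yv] using h1

/-! ### assembling the isomorphism -/

noncomputable def Dsub : Fin 3 → spInv := fun k => ⟨dd k, fun g => spAct_dd g k⟩

noncomputable def Psi : S3 →ₐ[ℂ] (spInv ⧸ spInvIdeal) :=
  (Ideal.Quotient.mkₐ ℂ spInvIdeal).comp (aeval Dsub)

lemma val_aeval_Dsub (P : S3) : (Subalgebra.val spInv) (aeval Dsub P) = aeval dd P := by
  have : (Subalgebra.val spInv).comp (aeval Dsub) = aeval dd := by
    apply MvPolynomial.algHom_ext
    intro i
    simp [Dsub]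
  exact congrFun (congrArg (fun (h : S3 →ₐ[ℂ] PolyHom) => h.toFun) this) P

lemma Psi_surj : Function.Surjective Psi := by
  intro z
  obtain ⟨f, rfl⟩ := Ideal.Quotient.mk_surjective z
  obtain ⟨Q, hQ⟩ := fft f.2
  refine ⟨Q, ?_⟩
  have : aeval Dsub Q = f := by
    apply Subtype.ext
    rw [show ((aeval Dsub Q : spInv) : PolyHom) = (Subalgebra.val spInv) (aeval Dsub Q) from rfl,
      val_aeval_Dsub, ← hQ]
  simp [Psi, this]

lemma mem_ker_Psi_iff (P : S3) : P ∈ RingHom.ker Psi.toRingHom ↔ aeval dd P ∈ rhoIdeal := by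
  rw [RingHom.mem_ker]
  constructor
  · intro h
    have : Ideal.Quotient.mk spInvIdeal (aeval Dsub P) = 0 := h
    rw [Ideal.Quotient.eq_zero_iff_mem, spInvIdeal, Ideal.mem_comap, val_aeval_Dsub] at this
    exact this
  · intro h
    show Ideal.Quotient.mk spInvIdeal (aeval Dsub P) = 0
    rw [Ideal.Quotient.eq_zero_iff_mem, spInvIdeal, Ideal.mem_comap, val_aeval_Dsub]
    exact h

lemma aeval_dd_span (r : S3) (hr : r ∈ Ideal.span (Set.range (X : Fin 3 → S3))) :
    aeval dd r ∈ Ideal.span (Set.range dd) := by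
  induction hr using Submodule.span_induction with
  | mem x hx =>
    obtain ⟨i, rfl⟩ := hx
    rw [aeval_X]
    exact Ideal.subset_span ⟨i, rfl⟩
  | zero => simp
  | add x y _ _ hx hy => rw [map_add]; exact Ideal.add_mem _ hx hy
  | smul c x _ hx =>
    rw [smul_eq_mul, map_mul]
    exact Ideal.mul_mem_left _ _ hx

lemma span_dd_mul : ∀ r ∈ Ideal.span (Set.range dd), ∀ s ∈ Ideal.span (Set.range dd),
    r * s ∈ rhoIdeal := by
  intro r hr
  induction hr using Submodule.span_induction with
  | mem x hx =>
    obtain ⟨i, rfl⟩ := hx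
    intro t ht
    induction ht using Submodule.span_induction with
    | mem y hy =>
      obtain ⟨j, rfl⟩ := hy
      exact dd_mul_dd_mem i j
    | zero => simp
    | add y z _ _ hy hz => rw [mul_add]; exact Ideal.add_mem _ hy hz
    | smul c y _ hy =>
      rw [smul_eq_mul, ← mul_assoc, mul_comm _ c, mul_assoc]
      exact Ideal.mul_mem_left _ _ hy
  | zero => intro t _; rw [zero_mul]; exact Ideal.zero_mem _
  | add y z _ _ hy hz => intro t ht; rw [add_mul]; exact Ideal.add_mem _ (hy t ht) (hz t ht)
  | smul c y _ hy =>
    intro t ht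
    rw [smul_eq_mul, mul_assoc]
    exact Ideal.mul_mem_left _ _ (hy t ht)

lemma ker_Psi : RingHom.ker Psi.toRingHom = J2 := by
  have hJ2le : J2 ≤ RingHom.ker Psi.toRingHom := by
    rw [J2, sq]
    refine Ideal.mul_le.mpr fun r hr s hs => ?_
    rw [mem_ker_Psi_iff, map_mul]
    exact span_dd_mul _ (aeval_dd_span r hr) _ (aeval_dd_span s hs)
  apply le_antisymm _ hJ2le
  intro P hP
  have hdec := decomp P
  set a := constantCoeff P with ha
  set b := fun i => coeff (Finsupp.single i 1) P with hb
  have hlin : C a + ∑ i : Fin 3, C (b i) * X i ∈ RingHom.ker Psi.toRingHom := by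
    have hE := hJ2le hdec
    have heq : C a + ∑ i : Fin 3, C (b i) * X i
        = P - (P - C a - ∑ i : Fin 3, C (b i) * X i) := by ring
    rw [heq]
    exact Ideal.sub_mem _ hP hE
  rw [mem_ker_Psi_iff] at hlin
  rw [map_add, map_sum] at hlin
  simp only [map_mul, aeval_X, aeval_C, Fin.sum_univ_three] at hlin
  have hlin' : C a + C (b 0) * dd 0 + C (b 1) * dd 1 + C (b 2) * dd 2 ∈ rhoIdeal := by
    have : (algebraMap ℂ PolyHom) a + ((algebraMap ℂ PolyHom) (b 0) * dd 0
        + (algebraMap ℂ PolyHom) (b 1) * dd 1 + (algebraMap ℂ PolyHom) (b 2) * dd 2)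
        = C a + C (b 0) * dd 0 + C (b 1) * dd 1 + C (b 2) * dd 2 := by
      simp [algebraMap_eq]
      ring
    rwa [this] at hlin
  obtain ⟨h0, h1, h2, h3⟩ := lin_coeffs_zero a (b 0) (b 1) (b 2) hlin'
  have hs : (∑ i : Fin 3, C (b i) * X i) = 0 := by
    rw [Fin.sum_univ_three, h1, h2, h3]
    simp
  rw [h0, hs] at hdec
  simpa using hdec

noncomputable def quotEquiv : (spInv ⧸ spInvIdeal) ≃ₐ[ℂ]
    (S3 ⧸ (Ideal.span (Set.range (X : Fin 3 → S3))) ^ 2) := by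
  have e1 : (S3 ⧸ RingHom.ker Psi.toRingHom) ≃ₐ[ℂ] (spInv ⧸ spInvIdeal) :=
    Ideal.quotientKerAlgEquivOfSurjective Psi_surj
  have e2 : (S3 ⧸ J2) ≃ₐ[ℂ] (S3 ⧸ RingHom.ker Psi.toRingHom) :=
    Ideal.quotientEquivAlgOfEq ℂ ker_Psi.symm
  have e3 : (S3 ⧸ (Ideal.span (Set.range (X : Fin 3 → S3))) ^ 2) ≃ₐ[ℂ] (S3 ⧸ J2) :=
    Ideal.quotientEquivAlgOfEq ℂ (by rw [J2])
  exact ((e3.trans e2).trans e1).symm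

noncomputable def tzEquiv : (S3 ⧸ J2) ≃ₐ[ℂ] Tz := by
  have e1 : (S3 ⧸ RingHom.ker (toTz : S3 →ₐ[ℂ] Tz).toRingHom) ≃ₐ[ℂ] Tz :=
    Ideal.quotientKerAlgEquivOfSurjective toTz_surj
  have e2 : (S3 ⧸ J2) ≃ₐ[ℂ] (S3 ⧸ RingHom.ker (toTz : S3 →ₐ[ℂ] Tz).toRingHom) :=
    Ideal.quotientEquivAlgOfEq ℂ ker_toTz.symm
  exact e2.trans e1

lemma finrank_J2quot : Module.finrank ℂ (S3 ⧸ J2) = 4 := by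
  have e : (S3 ⧸ J2) ≃ₗ[ℂ] ℂ × (Fin 3 → ℂ) :=
    tzEquiv.toLinearEquiv.trans (LinearEquiv.refl ℂ (ℂ × (Fin 3 → ℂ)))
  rw [e.finrank_eq]
  simp [Module.finrank_prod]

/-- the ring of `Sp(1)`-invariant functions on the scheme-theoretic fiber
`ρ⁻¹(0)` (for `ρ : Hom(ℂ³,ℂ²) → 𝔰𝔭(1)`, `ρ(i) = i∘i*`) is isomorphic to
`ℂ[x,y,z]/(x,y,z)²`: it is 4-dimensional, spanned by `1` and three elements of degree `2`;
in particular `ρ⁻¹(0)//Sp(1)` is non-reduced with reduction a point. -/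
theorem stmt15 :
    Nonempty ((spInv ⧸ spInvIdeal) ≃ₐ[ℂ]
      (MvPolynomial (Fin 3) ℂ ⧸ (Ideal.span (Set.range (X : Fin 3 → MvPolynomial (Fin 3) ℂ))) ^ 2)) ∧
    Module.finrank ℂ (spInv ⧸ spInvIdeal) = 4 ∧
    (∃ a : spInv ⧸ spInvIdeal, a ≠ 0 ∧ a * a = 0) := by
  refine ⟨⟨quotEquiv⟩, ?_, ?_⟩
  · have e : (spInv ⧸ spInvIdeal) ≃ₐ[ℂ] (S3 ⧸ J2) :=
      quotEquiv.trans (Ideal.quotientEquivAlgOfEq ℂ (by rw [J2]))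
    rw [e.toLinearEquiv.finrank_eq, finrank_J2quot]
  · refine ⟨quotEquiv.symm (Ideal.Quotient.mk _ (X 0)), ?_, ?_⟩
    · intro h
      have h2 : (Ideal.Quotient.mk ((Ideal.span (Set.range (X : Fin 3 → S3))) ^ 2) (X 0)) = 0 := by
        have := congrArg quotEquiv h
        rwa [AlgEquiv.apply_symm_apply, map_zero] at this
      rw [Ideal.Quotient.eq_zero_iff_mem] at h2
      exact X0_not_mem_J2 (by rw [J2]; exact h2)
    · rw [← map_mul, ← map_mul]
      have h2 : (Ideal.Quotient.mk ((Ideal.span (Set.range (X : Fin 3 → S3))) ^ 2)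
          ((X 0 : S3) * X 0)) = 0 := by
        rw [Ideal.Quotient.eq_zero_iff_mem]
        have := XiXj_mem_J2 (0:Fin 3) 0
        rwa [J2] at this
      rw [h2, map_zero]
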